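/- Let δ ≥ 0, K ≥ 0, v⁰ ∈ ℝ^{m+1} with ‖v⁰‖ ≤ δ, and let ψ : [0,∞) → ℝ^{m+1} be measurable with ‖ψ(t)‖ ≤ K·e^{−σt} for all t ≥ 0. Then for all t ≥ 0: |(Πψ)₀(t)| ≤ e^{−σt}·(δ + K·c₀) and |(Πψ)_j(t)| ≤ e^{−σt}·(δ + K·c_j) for j = 1,…,m, where c₀ = l₀√(2m)/(k₀−σ) + l_J·e^{(k₀−σ)ω}/(1 − e^{−(k₀−σ)ω}) and c_j = 2l_j/(k_j−σ). (This is the invariance estimate for the operator Π in the proof of Theorem 3.) -/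

import Mathlib

/-- The Euclidean norm on `Fin n → ℝ`. -/
noncomputable def eNorm {n : ℕ} (v : Fin n → ℝ) : ℝ := Real.sqrt (∑ j, v j ^ 2)

/-- The operator `Π` from the proof of Theorem 3: coordinate `0` gets
`(Πψ)₀(t) = e^{−k₀t}v⁰₀ + ∫₀^t e^{−k₀(t−s)} w₀(ψ(s)) ds
  + Σ_{0 ≤ θ_i < t} e^{−k₀(t−θ_i)} u₀(ψ₀(θ_i))`,
and the coordinates `j = 1,…,m` get
`(Πψ)_j(t) = e^{−k_jt}v⁰_j + ∫₀^t e^{−k_j(t−s)} w_j(ψ₀(s), ψ_j(s)) ds`. -/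
noncomputable def PiOp (m : ℕ) (θ : ℤ → ℝ) (k : Fin (m + 1) → ℝ)
    (w₀ : (Fin (m + 1) → ℝ) → ℝ) (w : Fin (m + 1) → ℝ → ℝ → ℝ) (u₀ : ℝ → ℝ)
    (v0 : Fin (m + 1) → ℝ) (ψ : ℝ → Fin (m + 1) → ℝ) : ℝ → Fin (m + 1) → ℝ := fun t j =>
  if j = 0 then
    Real.exp (-(k 0) * t) * v0 0
      + (∫ s in (0:ℝ)..t, Real.exp (-(k 0) * (t - s)) * w₀ (ψ s))
      + ∑' i : ℤ, (if 0 ≤ θ i ∧ θ i < t then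
          Real.exp (-(k 0) * (t - θ i)) * u₀ (ψ (θ i) 0) else 0)
  else
    Real.exp (-(k j) * t) * v0 j
      + ∫ s in (0:ℝ)..t, Real.exp (-(k j) * (t - s)) * w j (ψ s 0) (ψ s j)

private lemma exp_int (c t : ℝ) (hc : c ≠ 0) :
    ∫ s in (0:ℝ)..t, Real.exp (s * c) = (Real.exp (t*c) - 1)/c := by
  rw [intervalIntegral.integral_comp_mul_right Real.exp hc, integral_exp]
  simp [div_eq_inv_mul]

lemma abs_le_eNorm {n : ℕ} (v : Fin n → ℝ) (j : Fin n) : |v j| ≤ eNorm v := by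
  rw [eNorm, ← Real.sqrt_sq_eq_abs]
  exact Real.sqrt_le_sqrt (Finset.single_le_sum (fun i _ => sq_nonneg (v i)) (Finset.mem_univ j))

lemma intBound (kk σ C t : ℝ) (hσ : 0 < σ) (hkσ : σ < kk) (hC : 0 ≤ C) (ht : 0 ≤ t)
    (g : ℝ → ℝ) (hgb : ∀ s, s ∈ Set.Ioc (0:ℝ) t → |g s| ≤ C * Real.exp (-σ * s)) :
    |∫ s in (0:ℝ)..t, Real.exp (-kk*(t-s)) * g s| ≤ Real.exp (-σ*t) * (C/(kk-σ)) := by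
  have hc : (0:ℝ) < kk - σ := by linarith
  have h1 : |∫ s in (0:ℝ)..t, Real.exp (-kk*(t-s)) * g s|
      ≤ |∫ s in (0:ℝ)..t, C * Real.exp (-kk*t) * Real.exp (s*(kk-σ))| := by
    rw [← Real.norm_eq_abs (∫ s in (0:ℝ)..t, Real.exp (-kk*(t-s)) * g s)]
    apply intervalIntegral.norm_integral_le_abs_of_norm_le
    · filter_upwards [MeasureTheory.ae_restrict_mem measurableSet_uIoc] with s hs
      rw [Set.uIoc_of_le ht] at hs
      have h2 : ‖Real.exp (-kk*(t-s)) * g s‖ ≤ Real.exp (-kk*(t-s)) * (C * Real.exp (-σ*s)) := by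
        rw [Real.norm_eq_abs, abs_mul, abs_of_nonneg (Real.exp_nonneg _)]
        exact mul_le_mul_of_nonneg_left (hgb s hs) (Real.exp_nonneg _)
      refine h2.trans (le_of_eq ?_)
      have h3 : Real.exp (-kk*(t-s)) * Real.exp (-σ*s) = Real.exp (-kk*t) * Real.exp (s*(kk-σ)) := by
        rw [← Real.exp_add, ← Real.exp_add]; ring_nf
      linear_combination C * h3
    · exact (Continuous.intervalIntegrable (by continuity)) _ _
  refine h1.trans ?_
  rw [intervalIntegral.integral_const_mul, exp_int _ _ hc.ne']
  have hE1 : (1:ℝ) ≤ Real.exp (t*(kk-σ)) := Real.one_le_exp (mul_nonneg ht hc.le)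
  have hprod : Real.exp (-kk*t) * Real.exp (t*(kk-σ)) = Real.exp (-σ*t) := by
    rw [← Real.exp_add]; ring_nf
  have hnn : 0 ≤ C * Real.exp (-kk*t) * ((Real.exp (t*(kk-σ)) - 1)/(kk-σ)) :=
    mul_nonneg (mul_nonneg hC (Real.exp_nonneg _)) (div_nonneg (by linarith) hc.le)
  rw [abs_of_nonneg hnn,
    show C * Real.exp (-kk*t) * ((Real.exp (t*(kk-σ)) - 1)/(kk-σ))
      = (C * (Real.exp (-kk*t) * Real.exp (t*(kk-σ)) - Real.exp (-kk*t)))/(kk-σ) from by ring,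
    show Real.exp (-σ*t) * (C/(kk-σ)) = (Real.exp (-σ*t) * C)/(kk-σ) from by ring, hprod]
  refine (div_le_div_iff_of_pos_right hc).mpr ?_
  nlinarith [Real.exp_nonneg (-kk*t)]

private lemma sumBound (kk σ ω lJ K t : ℝ) (hσ : 0 < σ) (hkσ : σ < kk) (hω : 0 < ω)
    (hlJ : 0 ≤ lJ) (hK : 0 ≤ K) (ht : 0 ≤ t)
    (θ : ℤ → ℝ) (hθ : ∀ i : ℤ, (i:ℝ)*ω ≤ θ i ∧ θ i < ((i:ℝ)+1)*ω)
    (u : ℤ → ℝ) (hu : ∀ i, 0 ≤ θ i → |u i| ≤ lJ * K * Real.exp (-σ * θ i)) :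
    |∑' i : ℤ, (if 0 ≤ θ i ∧ θ i < t then Real.exp (-kk*(t-θ i)) * u i else 0)|
      ≤ Real.exp (-σ*t) * (K * (lJ * Real.exp ((kk-σ)*ω) / (1 - Real.exp (-((kk-σ)*ω))))) := by
  have hc : (0:ℝ) < kk - σ := by linarith
  set q : ℝ := Real.exp ((kk-σ)*ω) with hqdef
  have hq : 1 < q := by
    rw [hqdef, show (1:ℝ) = Real.exp 0 by simp]
    exact Real.exp_lt_exp.mpr (by positivity)
  have hq1 : (0:ℝ) < q - 1 := by linarith
  have hq0 : (0:ℝ) < q := by linarith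
  have hceil : (0:ℤ) ≤ ⌈t/ω⌉ := Int.ceil_nonneg (by positivity)
  set n : ℕ := (⌈t/ω⌉).toNat with hndef
  have hncast : ((n:ℤ):ℝ) = ((⌈t/ω⌉ : ℤ) : ℝ) := by rw [hndef, Int.toNat_of_nonneg hceil]
  have hnub : (n:ℝ) * ω < t + ω := by
    have h1 : ((⌈t/ω⌉ : ℤ) : ℝ) < t/ω + 1 := Int.ceil_lt_add_one _
    have h2 : (n:ℝ) < t/ω + 1 := by push_cast at hncast ⊢; rw [hncast]; exact h1
    calc (n:ℝ) * ω < (t/ω + 1) * ω := by nlinarith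
      _ = t + ω := by field_simp
  have hnlb : t ≤ (n:ℝ) * ω := by
    have h1 : t/ω ≤ ((⌈t/ω⌉ : ℤ) : ℝ) := Int.le_ceil _
    have h2 : t/ω ≤ (n:ℝ) := by push_cast at hncast ⊢; rw [hncast]; exact h1
    calc t = (t/ω) * ω := by field_simp
      _ ≤ (n:ℝ) * ω := by nlinarith
  set emb : ℕ ↪ ℤ := ⟨fun i => (i:ℤ), fun a b h => by simpa using h⟩ with hembdef
  set S : Finset ℤ := (Finset.range n).map emb with hSdef
  have hzero : ∀ i ∉ S, (if 0 ≤ θ i ∧ θ i < t then Real.exp (-kk*(t-θ i)) * u i else 0) = 0 := by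
    intro i hi
    rw [if_neg]
    rintro ⟨h0, hlt⟩
    by_cases hi0 : 0 ≤ i
    · have hmem : i.toNat ∉ Finset.range n := by
        intro hmem
        exact hi (Finset.mem_map.mpr ⟨i.toNat, hmem, Int.toNat_of_nonneg hi0⟩)
      have h4 : n ≤ i.toNat := le_of_not_gt (fun hlt' => hmem (Finset.mem_range.mpr hlt'))
      have hni : (n:ℤ) ≤ i := by omega
      have : t ≤ θ i := by
        refine hnlb.trans (le_trans ?_ (hθ i).1)
        have h5 : (n:ℝ) ≤ (i:ℝ) := by exact_mod_cast hni
        nlinarith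
      linarith
    · push_neg at hi0
      have h6 : i + 1 ≤ 0 := by omega
      have h3 : ((i:ℝ) + 1) * ω ≤ 0 := by
        have h7 : ((i:ℝ) + 1) ≤ 0 := by exact_mod_cast h6
        nlinarith
      linarith [(hθ i).2]
  rw [tsum_eq_sum hzero, hSdef, Finset.sum_map]
  have hterm : ∀ i ∈ Finset.range n,
      |if 0 ≤ θ (emb i) ∧ θ (emb i) < t then Real.exp (-kk*(t-θ (emb i))) * u (emb i) else 0|
        ≤ lJ * K * Real.exp (-kk*t) * q^(i+1) := by
    intro i _
    have hqpow : q^(i+1) = Real.exp ((kk-σ)*ω*((i:ℝ)+1)) := by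
      rw [show (kk-σ)*ω*((i:ℝ)+1) = ((i+1:ℕ):ℝ) * ((kk-σ)*ω) by push_cast; ring,
        Real.exp_nat_mul]
    split_ifs with h
    · obtain ⟨h0, hlt⟩ := h
      have hui := hu _ h0
      have hθub : θ (emb i) < ((i:ℝ)+1)*ω := by
        have h8 := (hθ (emb i)).2
        rw [(Int.cast_natCast (R := ℝ) i).symm]; exact h8
      rw [abs_mul, abs_of_nonneg (Real.exp_nonneg _)]
      have hcomb : Real.exp (-kk*(t-θ (emb i))) * Real.exp (-σ * θ (emb i))
          = Real.exp (-kk*t) * Real.exp ((kk-σ) * θ (emb i)) := by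
        rw [← Real.exp_add, ← Real.exp_add]; ring_nf
      calc Real.exp (-kk*(t-θ (emb i))) * |u (emb i)|
          ≤ Real.exp (-kk*(t-θ (emb i))) * (lJ * K * Real.exp (-σ * θ (emb i))) :=
            mul_le_mul_of_nonneg_left hui (Real.exp_nonneg _)
        _ = lJ * K * (Real.exp (-kk*t) * Real.exp ((kk-σ) * θ (emb i))) := by
            linear_combination (lJ * K) * hcomb
        _ ≤ lJ * K * (Real.exp (-kk*t) * Real.exp ((kk-σ)*(((i:ℝ)+1)*ω))) := by
            have h9 := Real.exp_le_exp.mpr (mul_le_mul_of_nonneg_left hθub.le hc.le)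
            exact mul_le_mul_of_nonneg_left
              (mul_le_mul_of_nonneg_left h9 (Real.exp_nonneg _)) (by positivity)
        _ = lJ * K * Real.exp (-kk*t) * q^(i+1) := by rw [hqpow]; ring_nf
    · simp only [abs_zero]; positivity
  refine (Finset.abs_sum_le_sum_abs _ _).trans ((Finset.sum_le_sum hterm).trans ?_)
  have hgeom : ∑ i ∈ Finset.range n, lJ * K * Real.exp (-kk*t) * q^(i+1)
      = lJ * K * Real.exp (-kk*t) * ((q^n - 1)/(q-1) * q) := by
    rw [← Finset.mul_sum]
    congr 1
    simp only [pow_succ]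
    rw [← Finset.sum_mul, geom_sum_eq hq.ne' n]
  rw [hgeom]
  have hqn : q^n ≤ Real.exp ((kk-σ)*t) * q := by
    have h10 : q^n = Real.exp ((n:ℝ) * ((kk-σ)*ω)) := (Real.exp_nat_mul _ n).symm
    rw [h10, hqdef, ← Real.exp_add]
    apply Real.exp_le_exp.mpr
    nlinarith
  have hEA : Real.exp (-kk*t) * Real.exp ((kk-σ)*t) = Real.exp (-σ*t) := by
    rw [← Real.exp_add]; ring_nf
  have hstep : lJ*K*Real.exp (-kk*t)*((q^n-1)/(q-1)*q)
      ≤ lJ*K*Real.exp (-kk*t)*((Real.exp ((kk-σ)*t)*q)/(q-1)*q) := by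
    apply mul_le_mul_of_nonneg_left ?_ (by positivity)
    apply mul_le_mul_of_nonneg_right ?_ hq0.le
    refine (div_le_div_iff_of_pos_right hq1).mpr ?_
    linarith
  refine hstep.trans (le_of_eq ?_)
  rw [← hEA, Real.exp_neg, show 1 - q⁻¹ = (q-1)/q from by field_simp]
  field_simp

/-- invariance estimate for `Π`, proof of Theorem 3: if `‖v⁰‖ ≤ δ` and
`‖ψ(t)‖ ≤ K·e^{−σt}` for `t ≥ 0`, then `|(Πψ)₀(t)| ≤ e^{−σt}(δ + K·c₀)` and
`|(Πψ)_j(t)| ≤ e^{−σt}(δ + K·c_j)`, where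
`c₀ = l₀√(2m)/(k₀−σ) + l_J·e^{(k₀−σ)ω}/(1 − e^{−(k₀−σ)ω})` and `c_j = 2l_j/(k_j−σ)`. -/
theorem stmt12
    (m : ℕ) (hm : 1 ≤ m) (ω : ℝ) (hω : 0 < ω) (θ : ℤ → ℝ)
    (hθ : ∀ i : ℤ, (i : ℝ) * ω ≤ θ i ∧ θ i < ((i : ℝ) + 1) * ω)
    (k : Fin (m + 1) → ℝ) (hk : ∀ j, 0 < k j)
    (l : Fin (m + 1) → ℝ) (lJ : ℝ) (hl : ∀ j, 0 ≤ l j) (hlJ : 0 ≤ lJ)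
    (w₀ : (Fin (m + 1) → ℝ) → ℝ) (w : Fin (m + 1) → ℝ → ℝ → ℝ) (u₀ : ℝ → ℝ)
    (hw₀meas : Measurable w₀) (hwmeas : ∀ j, Measurable fun p : ℝ × ℝ => w j p.1 p.2)
    (hu₀meas : Measurable u₀)
    (σ : ℝ) (hσ : 0 < σ) (hσk : ∀ j, σ < k j)
    (hw₀bd : ∀ v : Fin (m + 1) → ℝ, |w₀ v| ≤ l 0 * Real.sqrt (2 * m) * eNorm v)
    (hwbd : ∀ j, j ≠ 0 → ∀ a b : ℝ, |w j a b| ≤ l j * (|a| + |b|))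
    (hu₀bd : ∀ z : ℝ, |u₀ z| ≤ lJ * |z|)
    (δ K : ℝ) (hδ : 0 ≤ δ) (hK : 0 ≤ K)
    (v0 : Fin (m + 1) → ℝ) (hv0 : eNorm v0 ≤ δ)
    (ψ : ℝ → Fin (m + 1) → ℝ) (hψmeas : Measurable ψ)
    (hψbd : ∀ t : ℝ, 0 ≤ t → eNorm (ψ t) ≤ K * Real.exp (-σ * t)) :
    ∀ t : ℝ, 0 ≤ t →
      |PiOp m θ k w₀ w u₀ v0 ψ t 0| ≤
        Real.exp (-σ * t) * (δ + K * (l 0 * Real.sqrt (2 * m) / (k 0 - σ) + lJ * Real.exp ((k 0 - σ) * ω) / (1 - Real.exp (-((k 0 - σ) * ω))))) ∧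
      ∀ j, j ≠ 0 → |PiOp m θ k w₀ w u₀ v0 ψ t j| ≤
        Real.exp (-σ * t) * (δ + K * (2 * l j / (k j - σ))) := by
  
  intro t ht
  have hk0σ := hσk 0
  have hEσ : (0:ℝ) ≤ Real.exp (-σ*t) := (Real.exp_nonneg _)
  have hexple : ∀ j : Fin (m+1), Real.exp (-(k j) * t) ≤ Real.exp (-σ * t) := by
    intro j
    apply Real.exp_le_exp.mpr
    have := (hσk j).le
    nlinarith
  have hv0j : ∀ j, |v0 j| ≤ δ := fun j => (abs_le_eNorm v0 j).trans hv0
  have hA : ∀ j : Fin (m+1), |Real.exp (-(k j) * t) * v0 j| ≤ Real.exp (-σ*t) * δ := by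
    intro j
    rw [abs_mul, abs_of_nonneg (Real.exp_nonneg _)]
    exact mul_le_mul (hexple j) (hv0j j) (abs_nonneg _) hEσ
  have hψj : ∀ s, 0 ≤ s → ∀ j, |ψ s j| ≤ K * Real.exp (-σ * s) :=
    fun s hs j => (abs_le_eNorm (ψ s) j).trans (hψbd s hs)
  constructor
  · -- coordinate 0
    have hB : |∫ s in (0:ℝ)..t, Real.exp (-(k 0) * (t - s)) * w₀ (ψ s)|
        ≤ Real.exp (-σ*t) * ((l 0 * Real.sqrt (2*m) * K)/(k 0 - σ)) := by
      apply intBound (k 0) σ _ t hσ hk0σ (mul_nonneg (mul_nonneg (hl 0) (Real.sqrt_nonneg _)) hK) ht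
      intro s hs
      refine (hw₀bd (ψ s)).trans ?_
      have h1 : eNorm (ψ s) ≤ K * Real.exp (-σ * s) := hψbd s hs.1.le
      have h2 : (0:ℝ) ≤ l 0 * Real.sqrt (2*m) := mul_nonneg (hl 0) (Real.sqrt_nonneg _)
      calc l 0 * Real.sqrt (2*m) * eNorm (ψ s)
          ≤ l 0 * Real.sqrt (2*m) * (K * Real.exp (-σ*s)) := by
            apply mul_le_mul_of_nonneg_left _ h2
            refine h1.trans (le_of_eq ?_); ring_nf
        _ = l 0 * Real.sqrt (2*m) * K * Real.exp (-σ*s) := by ring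
    have hC : |∑' i : ℤ, (if 0 ≤ θ i ∧ θ i < t then
          Real.exp (-(k 0) * (t - θ i)) * u₀ (ψ (θ i) 0) else 0)|
        ≤ Real.exp (-σ*t) * (K * (lJ * Real.exp ((k 0 - σ)*ω) / (1 - Real.exp (-((k 0 - σ)*ω))))) := by
      apply sumBound (k 0) σ ω lJ K t hσ hk0σ hω hlJ hK ht θ hθ
      intro i h0
      refine (hu₀bd _).trans ?_
      have := hψj (θ i) h0 0
      calc lJ * |ψ (θ i) 0| ≤ lJ * (K * Real.exp (-σ * θ i)) :=
            mul_le_mul_of_nonneg_left this hlJ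
        _ = lJ * K * Real.exp (-σ * θ i) := by ring
    have habs : |PiOp m θ k w₀ w u₀ v0 ψ t 0|
        ≤ |Real.exp (-(k 0) * t) * v0 0|
          + |∫ s in (0:ℝ)..t, Real.exp (-(k 0) * (t - s)) * w₀ (ψ s)|
          + |∑' i : ℤ, (if 0 ≤ θ i ∧ θ i < t then
              Real.exp (-(k 0) * (t - θ i)) * u₀ (ψ (θ i) 0) else 0)| := by
      simp only [PiOp, if_pos]
      exact (abs_add_le _ _).trans (add_le_add_left (abs_add_le _ _) _)
    have hEq : Real.exp (-σ*t) * δ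
        + Real.exp (-σ*t) * ((l 0 * Real.sqrt (2*m) * K)/(k 0 - σ))
        + Real.exp (-σ*t) * (K * (lJ * Real.exp ((k 0 - σ)*ω) / (1 - Real.exp (-((k 0 - σ)*ω)))))
        = Real.exp (-σ * t) * (δ + K * (l 0 * Real.sqrt (2 * m) / (k 0 - σ)
            + lJ * Real.exp ((k 0 - σ) * ω) / (1 - Real.exp (-((k 0 - σ) * ω))))) := by
      ring
    have := habs.trans (add_le_add (add_le_add (hA 0) hB) hC)
    linarith
  · -- coordinates j ≠ 0
    intro j hj
    have hkjσ := hσk j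
    have hB : |∫ s in (0:ℝ)..t, Real.exp (-(k j) * (t - s)) * w j (ψ s 0) (ψ s j)|
        ≤ Real.exp (-σ*t) * ((2 * l j * K)/(k j - σ)) := by
      apply intBound (k j) σ _ t hσ hkjσ (mul_nonneg (mul_nonneg (by linarith [hl j]) (hl j)) hK) ht
      intro s hs
      refine (hwbd j hj (ψ s 0) (ψ s j)).trans ?_
      have h1 := hψj s hs.1.le 0
      have h2 := hψj s hs.1.le j
      have h3 : |ψ s 0| + |ψ s j| ≤ 2 * (K * Real.exp (-σ * s)) := by linarith
      calc l j * (|ψ s 0| + |ψ s j|) ≤ l j * (2 * (K * Real.exp (-σ * s))) :=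
            mul_le_mul_of_nonneg_left h3 (hl j)
        _ = 2 * l j * K * Real.exp (-σ * s) := by ring
    have habs : |PiOp m θ k w₀ w u₀ v0 ψ t j|
        ≤ |Real.exp (-(k j) * t) * v0 j|
          + |∫ s in (0:ℝ)..t, Real.exp (-(k j) * (t - s)) * w j (ψ s 0) (ψ s j)| := by
      simp only [PiOp, if_neg hj]
      exact abs_add_le _ _
    have hEq : Real.exp (-σ*t) * δ + Real.exp (-σ*t) * ((2 * l j * K)/(k j - σ))
        = Real.exp (-σ * t) * (δ + K * (2 * l j / (k j - σ))) := by ring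
    have := habs.trans (add_le_add (hA j) hB)
    linarith
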